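/- Cubic Filon quadrature for the initialization integral: let λ ∈ ℂ, Δt > 0 with z := Δt·λ ≠ 0, and let G₀, G₁, G₂, G₃ ∈ ℂ. Let P₃(τ) be the unique cubic polynomial with P₃(0) = G₀, P₃(Δt) = G₁, P₃(2Δt) = G₂, P₃(3Δt) = G₃. Then ∫₀^{3Δt} e^{(Δt−τ)λ} P₃(τ) dτ = e^{Δtλ}( q₄ G₀ + q₅ G₁ + q₆ G₂ + q₇ G₃ ), where q₄ = Δt(2z²e^{−3z} + 6z e^{−3z} + 6e^{−3z} + 6z³ + 12z − 11z² − 6)/(6z⁴), q₅ = Δt(−3z²e^{−3z} − 8z e^{−3z} − 6e^{−3z} + 6z² − 10z + 6)/(2z⁴), q₆ = Δt(6z²e^{−3z} + 10z e^{−3z} + 6e^{−3z} − 3z² + 8z − 6)/(2z⁴), q₇ = Δt(−6z³e^{−3z} − 11z²e^{−3z} − 12z e^{−3z} − 6e^{−3z} + 2z² − 6z + 6)/(6z⁴). -/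

import Mathlib

set_option maxHeartbeats 1600000

open MeasureTheory intervalIntegral

/-- Antiderivative lemma: integral of `exp ((Δt - τ)·λ)` times a cubic. -/
lemma cubic_exp_integral (lam : ℂ) (Δt T : ℝ) (a b c d q0 q1 q2 q3 : ℂ)
    (h0 : q1 - lam * q0 = a) (h1 : 2 * q2 - lam * q1 = b)
    (h2 : 3 * q3 - lam * q2 = c) (h3 : -(lam * q3) = d) :
    (∫ τ in (0:ℝ)..T, Complex.exp (((Δt : ℂ) - τ) * lam) * (a + b * τ + c * τ ^ 2 + d * τ ^ 3))
      = Complex.exp (((Δt : ℂ) - T) * lam) * (q0 + q1 * T + q2 * T ^ 2 + q3 * T ^ 3)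
        - Complex.exp ((Δt : ℂ) * lam) * q0 := by
  have key : ∀ w : ℂ, HasDerivAt
      (fun w : ℂ => Complex.exp (((Δt : ℂ) - w) * lam) * (q0 + q1 * w + q2 * w ^ 2 + q3 * w ^ 3))
      (Complex.exp (((Δt : ℂ) - w) * lam) * (a + b * w + c * w ^ 2 + d * w ^ 3)) w := by
    intro w
    have hexp : HasDerivAt (fun w : ℂ => Complex.exp (((Δt : ℂ) - w) * lam))
        (Complex.exp (((Δt : ℂ) - w) * lam) * (-1 * lam)) w :=
      (((hasDerivAt_id w).const_sub (Δt : ℂ)).mul_const lam).cexp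
    have hpoly : HasDerivAt (fun w : ℂ => q0 + q1 * w + q2 * w ^ 2 + q3 * w ^ 3)
        (q1 + 2 * q2 * w + 3 * q3 * w ^ 2) w := by
      have ha := (hasDerivAt_id w).const_mul q1
      have hb := (hasDerivAt_pow 2 w).const_mul q2
      have hc := (hasDerivAt_pow 3 w).const_mul q3
      have := ((hasDerivAt_const w q0).add ha).add hb |>.add hc
      refine this.congr_deriv (Eq.symm ?_)
      push_cast
      ring
    have := hexp.mul hpoly
    refine this.congr_deriv (Eq.symm ?_)
    linear_combination (-Complex.exp (((Δt : ℂ) - w) * lam)) * h0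
      + (-Complex.exp (((Δt : ℂ) - w) * lam)) * w * h1
      + (-Complex.exp (((Δt : ℂ) - w) * lam)) * w ^ 2 * h2
      + (-Complex.exp (((Δt : ℂ) - w) * lam)) * w ^ 3 * h3
  have hderiv : ∀ τ ∈ Set.uIcc (0:ℝ) T, HasDerivAt
      (fun τ : ℝ => Complex.exp (((Δt : ℂ) - τ) * lam) * (q0 + q1 * τ + q2 * τ ^ 2 + q3 * τ ^ 3))
      (Complex.exp (((Δt : ℂ) - τ) * lam) * (a + b * τ + c * τ ^ 2 + d * τ ^ 3)) τ := by
    intro τ _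
    exact (key ((τ : ℝ) : ℂ)).comp_ofReal
  have hcont : Continuous fun τ : ℝ =>
      Complex.exp (((Δt : ℂ) - τ) * lam) * (a + b * τ + c * τ ^ 2 + d * τ ^ 3) := by
    fun_prop
  have := intervalIntegral.integral_eq_sub_of_hasDerivAt hderiv
    (hcont.intervalIntegrable _ _)
  rw [this]
  push_cast
  ring_nf

/-- Cubic Filon quadrature for the initialization integral. -/
theorem cubic_filon_initialization (lam : ℂ) (Δt : ℝ) (hΔt : 0 < Δt)
    (z : ℂ) (hzdef : z = (Δt : ℂ) * lam) (hz : z ≠ 0)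
    (G0 G1 G2 G3 : ℂ)
    (P : ℝ → ℂ)
    (hP : ∀ τ : ℝ, P τ =
      -G0 * ((τ - Δt : ℝ) : ℂ) * ((τ - 2 * Δt : ℝ) : ℂ) * ((τ - 3 * Δt : ℝ) : ℂ)
        / (6 * (Δt : ℂ) ^ 3)
      + G1 * ((τ : ℝ) : ℂ) * ((τ - 2 * Δt : ℝ) : ℂ) * ((τ - 3 * Δt : ℝ) : ℂ)
        / (2 * (Δt : ℂ) ^ 3)
      - G2 * ((τ : ℝ) : ℂ) * ((τ - Δt : ℝ) : ℂ) * ((τ - 3 * Δt : ℝ) : ℂ)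
        / (2 * (Δt : ℂ) ^ 3)
      + G3 * ((τ : ℝ) : ℂ) * ((τ - Δt : ℝ) : ℂ) * ((τ - 2 * Δt : ℝ) : ℂ)
        / (6 * (Δt : ℂ) ^ 3))
    (q₄ q₅ q₆ q₇ : ℂ)
    (hq₄ : q₄ = (Δt : ℂ) * (2 * z ^ 2 * Complex.exp (-3 * z) + 6 * z * Complex.exp (-3 * z)
      + 6 * Complex.exp (-3 * z) + 6 * z ^ 3 + 12 * z - 11 * z ^ 2 - 6) / (6 * z ^ 4))
    (hq₅ : q₅ = (Δt : ℂ) * (-3 * z ^ 2 * Complex.exp (-3 * z) - 8 * z * Complex.exp (-3 * z)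
      - 6 * Complex.exp (-3 * z) + 6 * z ^ 2 - 10 * z + 6) / (2 * z ^ 4))
    (hq₆ : q₆ = (Δt : ℂ) * (6 * z ^ 2 * Complex.exp (-3 * z) + 10 * z * Complex.exp (-3 * z)
      + 6 * Complex.exp (-3 * z) - 3 * z ^ 2 + 8 * z - 6) / (2 * z ^ 4))
    (hq₇ : q₇ = (Δt : ℂ) * (-6 * z ^ 3 * Complex.exp (-3 * z) - 11 * z ^ 2 * Complex.exp (-3 * z)
      - 12 * z * Complex.exp (-3 * z) - 6 * Complex.exp (-3 * z) + 2 * z ^ 2 - 6 * z + 6)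
      / (6 * z ^ 4)) :
    (∫ τ in (0:ℝ)..(3 * Δt), Complex.exp (((Δt - τ : ℝ) : ℂ) * lam) * P τ)
      = Complex.exp ((Δt : ℂ) * lam) * (q₄ * G0 + q₅ * G1 + q₆ * G2 + q₇ * G3) := by
  have hΔ : (Δt : ℂ) ≠ 0 := by
    exact_mod_cast (ne_of_gt hΔt)
  have hlam : lam ≠ 0 := by
    intro h
    exact hz (by rw [hzdef, h, mul_zero])
  have hint : (∫ τ in (0:ℝ)..(3 * Δt), Complex.exp (((Δt - τ : ℝ) : ℂ) * lam) * P τ)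
      = ∫ τ in (0:ℝ)..(3 * Δt),
          Complex.exp (((Δt : ℂ) - τ) * lam) *
            (G0 + ((-11 * G0 + 18 * G1 - 9 * G2 + 2 * G3) / (6 * (Δt : ℂ))) * τ
              + ((2 * G0 - 5 * G1 + 4 * G2 - G3) / (2 * (Δt : ℂ) ^ 2)) * τ ^ 2
              + ((-G0 + 3 * G1 - 3 * G2 + G3) / (6 * (Δt : ℂ) ^ 3)) * τ ^ 3) := by
    apply intervalIntegral.integral_congr
    intro τ _
    simp only [hP]
    push_cast
    field_simp [hΔ]
    ring
  rw [hint, cubic_exp_integral lam Δt (3 * Δt)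
    G0
    ((-11 * G0 + 18 * G1 - 9 * G2 + 2 * G3) / (6 * (Δt : ℂ)))
    ((2 * G0 - 5 * G1 + 4 * G2 - G3) / (2 * (Δt : ℂ) ^ 2))
    ((-G0 + 3 * G1 - 3 * G2 + G3) / (6 * (Δt : ℂ) ^ 3))
    ((6 * (G0 - 3 * G1 + 3 * G2 - G3) - 6 * (Δt : ℂ) * lam * (2 * G0 - 5 * G1 + 4 * G2 - G3)
        - (Δt : ℂ) ^ 2 * lam ^ 2 * (-11 * G0 + 18 * G1 - 9 * G2 + 2 * G3)
        - 6 * (Δt : ℂ) ^ 3 * lam ^ 3 * G0) / (6 * (Δt : ℂ) ^ 3 * lam ^ 4))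
    ((lam * (6 * (G0 - 3 * G1 + 3 * G2 - G3) - 6 * (Δt : ℂ) * lam * (2 * G0 - 5 * G1 + 4 * G2 - G3)
        - (Δt : ℂ) ^ 2 * lam ^ 2 * (-11 * G0 + 18 * G1 - 9 * G2 + 2 * G3)))
      / (6 * (Δt : ℂ) ^ 3 * lam ^ 4))
    ((lam ^ 2 * (3 * (G0 - 3 * G1 + 3 * G2 - G3)
        - 3 * (Δt : ℂ) * lam * (2 * G0 - 5 * G1 + 4 * G2 - G3)))
      / (6 * (Δt : ℂ) ^ 3 * lam ^ 4))
    ((lam ^ 3 * (G0 - 3 * G1 + 3 * G2 - G3)) / (6 * (Δt : ℂ) ^ 3 * lam ^ 4))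
    (by field_simp [hΔ, hlam]; ring) (by field_simp [hΔ, hlam]; ring)
    (by field_simp [hΔ, hlam]; ring) (by field_simp [hΔ, hlam]; ring)]
  have hsplit : ((Δt : ℂ) - ((3 * Δt : ℝ) : ℂ)) * lam = (Δt : ℂ) * lam + -3 * z := by
    rw [hzdef]; push_cast; ring
  rw [hsplit, Complex.exp_add, hq₄, hq₅, hq₆, hq₇, hzdef]
  push_cast
  calc Complex.exp ((Δt : ℂ) * lam) * Complex.exp (-3 * ((Δt : ℂ) * lam)) *
        ((6 * (G0 - 3 * G1 + 3 * G2 - G3) - 6 * (Δt : ℂ) * lam * (2 * G0 - 5 * G1 + 4 * G2 - G3)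
            - (Δt : ℂ) ^ 2 * lam ^ 2 * (-11 * G0 + 18 * G1 - 9 * G2 + 2 * G3)
            - 6 * (Δt : ℂ) ^ 3 * lam ^ 3 * G0) / (6 * (Δt : ℂ) ^ 3 * lam ^ 4)
          + ((lam * (6 * (G0 - 3 * G1 + 3 * G2 - G3)
              - 6 * (Δt : ℂ) * lam * (2 * G0 - 5 * G1 + 4 * G2 - G3)
              - (Δt : ℂ) ^ 2 * lam ^ 2 * (-11 * G0 + 18 * G1 - 9 * G2 + 2 * G3)))
            / (6 * (Δt : ℂ) ^ 3 * lam ^ 4)) * (3 * (Δt : ℂ))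
          + ((lam ^ 2 * (3 * (G0 - 3 * G1 + 3 * G2 - G3)
              - 3 * (Δt : ℂ) * lam * (2 * G0 - 5 * G1 + 4 * G2 - G3)))
            / (6 * (Δt : ℂ) ^ 3 * lam ^ 4)) * (3 * (Δt : ℂ)) ^ 2
          + ((lam ^ 3 * (G0 - 3 * G1 + 3 * G2 - G3)) / (6 * (Δt : ℂ) ^ 3 * lam ^ 4))
            * (3 * (Δt : ℂ)) ^ 3)
      - Complex.exp ((Δt : ℂ) * lam) *
        ((6 * (G0 - 3 * G1 + 3 * G2 - G3) - 6 * (Δt : ℂ) * lam * (2 * G0 - 5 * G1 + 4 * G2 - G3)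
            - (Δt : ℂ) ^ 2 * lam ^ 2 * (-11 * G0 + 18 * G1 - 9 * G2 + 2 * G3)
            - 6 * (Δt : ℂ) ^ 3 * lam ^ 3 * G0) / (6 * (Δt : ℂ) ^ 3 * lam ^ 4))
      = (Complex.exp ((Δt : ℂ) * lam) * Complex.exp (-3 * ((Δt : ℂ) * lam)) *
          ((6 * (G0 - 3 * G1 + 3 * G2 - G3)
              - 6 * (Δt : ℂ) * lam * (2 * G0 - 5 * G1 + 4 * G2 - G3)
              - (Δt : ℂ) ^ 2 * lam ^ 2 * (-11 * G0 + 18 * G1 - 9 * G2 + 2 * G3)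
              - 6 * (Δt : ℂ) ^ 3 * lam ^ 3 * G0)
            + lam * (6 * (G0 - 3 * G1 + 3 * G2 - G3)
              - 6 * (Δt : ℂ) * lam * (2 * G0 - 5 * G1 + 4 * G2 - G3)
              - (Δt : ℂ) ^ 2 * lam ^ 2 * (-11 * G0 + 18 * G1 - 9 * G2 + 2 * G3)) * (3 * (Δt : ℂ))
            + lam ^ 2 * (3 * (G0 - 3 * G1 + 3 * G2 - G3)
              - 3 * (Δt : ℂ) * lam * (2 * G0 - 5 * G1 + 4 * G2 - G3)) * (3 * (Δt : ℂ)) ^ 2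
            + lam ^ 3 * (G0 - 3 * G1 + 3 * G2 - G3) * (3 * (Δt : ℂ)) ^ 3)
          - Complex.exp ((Δt : ℂ) * lam) *
            (6 * (G0 - 3 * G1 + 3 * G2 - G3)
              - 6 * (Δt : ℂ) * lam * (2 * G0 - 5 * G1 + 4 * G2 - G3)
              - (Δt : ℂ) ^ 2 * lam ^ 2 * (-11 * G0 + 18 * G1 - 9 * G2 + 2 * G3)
              - 6 * (Δt : ℂ) ^ 3 * lam ^ 3 * G0)) / (6 * (Δt : ℂ) ^ 3 * lam ^ 4) := by
        ring
    _ = Complex.exp ((Δt : ℂ) * lam) * ((Δt : ℂ) *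
          ((2 * ((Δt : ℂ) * lam) ^ 2 * Complex.exp (-3 * ((Δt : ℂ) * lam))
              + 6 * ((Δt : ℂ) * lam) * Complex.exp (-3 * ((Δt : ℂ) * lam))
              + 6 * Complex.exp (-3 * ((Δt : ℂ) * lam)) + 6 * ((Δt : ℂ) * lam) ^ 3
              + 12 * ((Δt : ℂ) * lam) - 11 * ((Δt : ℂ) * lam) ^ 2 - 6) * G0
            + 3 * (-3 * ((Δt : ℂ) * lam) ^ 2 * Complex.exp (-3 * ((Δt : ℂ) * lam))
              - 8 * ((Δt : ℂ) * lam) * Complex.exp (-3 * ((Δt : ℂ) * lam))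
              - 6 * Complex.exp (-3 * ((Δt : ℂ) * lam)) + 6 * ((Δt : ℂ) * lam) ^ 2
              - 10 * ((Δt : ℂ) * lam) + 6) * G1
            + 3 * (6 * ((Δt : ℂ) * lam) ^ 2 * Complex.exp (-3 * ((Δt : ℂ) * lam))
              + 10 * ((Δt : ℂ) * lam) * Complex.exp (-3 * ((Δt : ℂ) * lam))
              + 6 * Complex.exp (-3 * ((Δt : ℂ) * lam)) - 3 * ((Δt : ℂ) * lam) ^ 2
              + 8 * ((Δt : ℂ) * lam) - 6) * G2
            + (-6 * ((Δt : ℂ) * lam) ^ 3 * Complex.exp (-3 * ((Δt : ℂ) * lam))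
              - 11 * ((Δt : ℂ) * lam) ^ 2 * Complex.exp (-3 * ((Δt : ℂ) * lam))
              - 12 * ((Δt : ℂ) * lam) * Complex.exp (-3 * ((Δt : ℂ) * lam))
              - 6 * Complex.exp (-3 * ((Δt : ℂ) * lam)) + 2 * ((Δt : ℂ) * lam) ^ 2
              - 6 * ((Δt : ℂ) * lam) + 6) * G3))
          / (6 * ((Δt : ℂ) * lam) ^ 4) := by
        rw [div_eq_div_iff (by simp [pow_eq_zero_iff, hΔ, hlam])
          (by simp [pow_eq_zero_iff, hΔ, hlam, mul_eq_zero])]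
        ring
    _ = Complex.exp ((Δt : ℂ) * lam) *
          ((Δt : ℂ) * (2 * ((Δt : ℂ) * lam) ^ 2 * Complex.exp (-3 * ((Δt : ℂ) * lam))
              + 6 * ((Δt : ℂ) * lam) * Complex.exp (-3 * ((Δt : ℂ) * lam))
              + 6 * Complex.exp (-3 * ((Δt : ℂ) * lam)) + 6 * ((Δt : ℂ) * lam) ^ 3
              + 12 * ((Δt : ℂ) * lam) - 11 * ((Δt : ℂ) * lam) ^ 2 - 6)
              / (6 * ((Δt : ℂ) * lam) ^ 4) * G0
            + (Δt : ℂ) * (-3 * ((Δt : ℂ) * lam) ^ 2 * Complex.exp (-3 * ((Δt : ℂ) * lam))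
              - 8 * ((Δt : ℂ) * lam) * Complex.exp (-3 * ((Δt : ℂ) * lam))
              - 6 * Complex.exp (-3 * ((Δt : ℂ) * lam)) + 6 * ((Δt : ℂ) * lam) ^ 2
              - 10 * ((Δt : ℂ) * lam) + 6) / (2 * ((Δt : ℂ) * lam) ^ 4) * G1
            + (Δt : ℂ) * (6 * ((Δt : ℂ) * lam) ^ 2 * Complex.exp (-3 * ((Δt : ℂ) * lam))
              + 10 * ((Δt : ℂ) * lam) * Complex.exp (-3 * ((Δt : ℂ) * lam))
              + 6 * Complex.exp (-3 * ((Δt : ℂ) * lam)) - 3 * ((Δt : ℂ) * lam) ^ 2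
              + 8 * ((Δt : ℂ) * lam) - 6) / (2 * ((Δt : ℂ) * lam) ^ 4) * G2
            + (Δt : ℂ) * (-6 * ((Δt : ℂ) * lam) ^ 3 * Complex.exp (-3 * ((Δt : ℂ) * lam))
              - 11 * ((Δt : ℂ) * lam) ^ 2 * Complex.exp (-3 * ((Δt : ℂ) * lam))
              - 12 * ((Δt : ℂ) * lam) * Complex.exp (-3 * ((Δt : ℂ) * lam))
              - 6 * Complex.exp (-3 * ((Δt : ℂ) * lam)) + 2 * ((Δt : ℂ) * lam) ^ 2
              - 6 * ((Δt : ℂ) * lam) + 6) / (6 * ((Δt : ℂ) * lam) ^ 4) * G3) := by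
        ring
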